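/- Let T_1 and T_2 be bounded linear operators on a complex Hilbert space H. Then ‖T_1 + T_2‖² ≤ ‖ T_1* T_1 + T_2* T_2 + (1/2)(T_1 + T_2)*(T_1 + T_2) ‖. -/

import Mathlib

open ContinuousLinearMap

theorem norm_sq_add_le_norm_half
    {H : Type*} [NormedAddCommGroup H] [InnerProductSpace ℂ H] [CompleteSpace H]
    (T₁ T₂ : H →L[ℂ] H) :
    ‖T₁ + T₂‖ ^ 2 ≤
      ‖adjoint T₁ ∘L T₁ + adjoint T₂ ∘L T₂ +
        (2 : ℂ)⁻¹ • (adjoint (T₁ + T₂) ∘L (T₁ + T₂))‖ := by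
  set S := T₁ + T₂ with hS
  set A := adjoint T₁ ∘L T₁ + adjoint T₂ ∘L T₂ + (2 : ℂ)⁻¹ • (adjoint S ∘L S) with hA
  have key : ∀ x : H, ‖S x‖ ^ 2 ≤ ‖A‖ * ‖x‖ ^ 2 := by
    intro x
    have h1 : (inner ℂ (A x) x : ℂ).re
        = ‖T₁ x‖^2 + ‖T₂ x‖^2 + (2:ℝ)⁻¹ * ‖S x‖^2 := by
      simp only [hA, add_apply, coe_smul', Pi.smul_apply, comp_apply,
        inner_add_left, inner_smul_left, adjoint_inner_left, inner_self_eq_norm_sq_to_K]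
      push_cast
      simp [Complex.add_re, Complex.mul_re]
      norm_cast
    have h2 : ‖S x‖^2 ≤ (2:ℝ) * (‖T₁ x‖^2 + ‖T₂ x‖^2) := by
      have := norm_add_le (T₁ x) (T₂ x)
      have hSx : S x = T₁ x + T₂ x := rfl
      rw [hSx]
      nlinarith [this, sq_nonneg (‖T₁ x‖ - ‖T₂ x‖), norm_nonneg (T₁ x + T₂ x), norm_nonneg (T₁ x), norm_nonneg (T₂ x)]
    have h3 : ‖S x‖^2 ≤ (inner ℂ (A x) x : ℂ).re := by rw [h1]; linarith
    have h4 : (inner ℂ (A x) x : ℂ).re ≤ ‖A‖ * ‖x‖^2 := by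
      calc (inner ℂ (A x) x : ℂ).re ≤ ‖(inner ℂ (A x) x : ℂ)‖ := Complex.re_le_norm _
        _ ≤ ‖A x‖ * ‖x‖ := norm_inner_le_norm _ _
        _ ≤ (‖A‖ * ‖x‖) * ‖x‖ := by
            gcongr; exact A.le_opNorm x
        _ = ‖A‖ * ‖x‖^2 := by ring
    linarith
  have hnorm : ‖S‖ ≤ Real.sqrt ‖A‖ := by
    apply opNorm_le_bound _ (Real.sqrt_nonneg _)
    intro x
    have := key x
    have h := Real.sqrt_le_sqrt this
    calc ‖S x‖ = Real.sqrt (‖S x‖^2) := by rw [Real.sqrt_sq (norm_nonneg _)]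
      _ ≤ Real.sqrt (‖A‖ * ‖x‖^2) := h
      _ = Real.sqrt ‖A‖ * ‖x‖ := by
          rw [Real.sqrt_mul (norm_nonneg _), Real.sqrt_sq (norm_nonneg _)]
  calc ‖S‖^2 ≤ (Real.sqrt ‖A‖)^2 := by gcongr
    _ = ‖A‖ := Real.sq_sqrt (norm_nonneg _)
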